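/- In G_{m,n} = ⟨b, c | b^m = c^n⟩ with the isolated ordering <_{m,n} whose positive cone is generated by {b c^{1−n}, c}, the element bc satisfies b^m <_{m,n} bc <_{m,n} b^{2m}; since b^m is a <_{m,n}-cofinal central element, bc is <_{m,n}-positive cofinal, and <_{m,n} is right invariant under multiplication by bc. -/

import Mathlib

/-- The relation `b^m = c^n` defining `G_{m,n} = ⟨b, c | b^m = c^n⟩`,
where `b` is `of true` and `c` is `of false`. -/
def relsG (m n : ℕ) : Set (FreeGroup Bool) :=
  {FreeGroup.of true ^ m * (FreeGroup.of false ^ n)⁻¹}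

/-- `b` in `G_{m,n}`. -/
def bG (m n : ℕ) : PresentedGroup (relsG m n) := PresentedGroup.of true

/-- `c` in `G_{m,n}`. -/
def cG (m n : ℕ) : PresentedGroup (relsG m n) := PresentedGroup.of false

/-- The defining relation holds in `G_{m,n}`. -/
lemma bG_pow_eq_cG_pow (m n : ℕ) : bG m n ^ m = cG m n ^ n := by
  have h : (PresentedGroup.mk (relsG m n))
      (FreeGroup.of true ^ m * (FreeGroup.of false ^ n)⁻¹) = 1 := by
    apply (QuotientGroup.eq_one_iff _).mpr
    exact Subgroup.subset_normalClosure (by simp [relsG])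
  rw [map_mul, map_inv, map_pow, map_pow, mul_inv_eq_one] at h
  exact h

/-- The abstract core: everything follows from the relation `b ^ m = c ^ n`
in an arbitrary group. -/
lemma abstract_core {G : Type*} [Group G] (m n : ℕ) (hm : 2 ≤ m) (hn : 2 ≤ n)
    (b c : G) (hbc : b ^ m = c ^ n)
    (r : G → G → Prop)
    (hsto : IsStrictTotalOrder G r)
    (hleft : ∀ a b c, r a b → r (c * a) (c * b))
    (hcone : {g | r 1 g} =
      (Subsemigroup.closure {b * c ^ ((1 : ℤ) - n), c} : Set G)) :
    r (b ^ m) (b * c) ∧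
    r (b * c) (b ^ (2 * m)) ∧
    r 1 (b * c) ∧
    (∀ y : G, ∃ k K : ℤ, r ((b * c) ^ k) y ∧ r y ((b * c) ^ K)) ∧
    (∀ a a', r a a' → r (a * (b * c)) (a' * (b * c))) := by
  obtain ⟨m, rfl⟩ : ∃ m', m = m' + 2 := ⟨m - 2, by omega⟩
  obtain ⟨n, rfl⟩ : ∃ n', n = n' + 2 := ⟨n - 2, by omega⟩
  clear hm hn
  set a : G := b * c ^ ((1 : ℤ) - (n + 2 : ℕ)) with ha_def
  have ha_eq : a = b * (c ^ (n + 1))⁻¹ := by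
    rw [ha_def]
    congr 1
    rw [← zpow_natCast c (n + 1), ← zpow_neg]
    congr 1
  -- basic order tools
  have htrans : ∀ x y z : G, r x y → r y z → r x z :=
    fun x y z h1 h2 => hsto.toIsStrictOrder.toIsTrans.trans x y z h1 h2
  have htri : ∀ x y : G, r x y ∨ x = y ∨ r y x :=
    fun x y => @trichotomous _ r hsto.toTrichotomous x y
  have hconv : ∀ x y : G, r x y ↔ r 1 (x⁻¹ * y) := by
    intro x y
    constructor
    · intro h
      have := hleft _ _ x⁻¹ h
      rwa [inv_mul_cancel] at this
    · intro h
      have := hleft _ _ x h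
      rwa [mul_one, mul_inv_cancel_left] at this
  have hmulP : ∀ x y : G, r 1 x → r 1 y → r 1 (x * y) := by
    intro x y hx hy
    exact htrans _ _ _ hx (by simpa using hleft _ _ x hy)
  have hmem : ∀ g : G, r 1 g ↔ g ∈ Subsemigroup.closure ({a, c} : Set G) := by
    intro g
    exact Set.ext_iff.mp hcone g
  have hpowP : ∀ (x : G), r 1 x → ∀ k : ℕ, r 1 (x ^ (k + 1)) := by
    intro x hx k
    induction k with
    | zero => simpa using hx
    | succ k ih => rw [pow_succ]; exact hmulP _ _ ih hx
  -- positivity of generators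
  have ha : r 1 a := (hmem a).mpr (Subsemigroup.subset_closure (Set.mem_insert _ _))
  have hc : r 1 c :=
    (hmem c).mpr (Subsemigroup.subset_closure (Set.mem_insert_of_mem _ rfl))
  have hb_eq : b = a * c ^ (n + 1) := by rw [ha_eq]; group
  have hb : r 1 b := by
    rw [hb_eq]
    exact hmulP _ _ ha (hpowP c hc n)
  have hB : r 1 (b ^ (m + 2)) := by
    have := hpowP b hb (m + 1)
    simpa using this
  -- commutation facts
  have hBc : Commute (b ^ (m + 2)) c := by
    rw [hbc]; exact (Commute.refl c).pow_left (n + 2)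
  have hBb : Commute (b ^ (m + 2)) b := (Commute.refl b).pow_left (m + 2)
  have hBa : Commute (b ^ (m + 2)) a := by
    rw [ha_eq]
    exact hBb.mul_right (hBc.pow_right (n + 1)).inv_right
  -- key identity : b * c = b^(m+2) * a
  have hbca : b * c = b ^ (m + 2) * a := by
    rw [ha_eq, ← mul_assoc, hBb.eq, hbc]
    have h2 : (c : G) ^ (n + 2) = c * c ^ (n + 1) := by rw [← pow_succ']
    rw [h2]
    group
  -- Conjunct 1 : r (b^(m+2)) (b*c)
  have hc1 : r (b ^ (m + 2)) (b * c) := by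
    rw [hconv]
    have h : (b ^ (m + 2))⁻¹ * (b * c) = a := by rw [hbca]; group
    rwa [h]
  -- Conjunct 2 : r (b*c) (b^(2*(m+2)))
  have hc2 : r (b * c) (b ^ (2 * (m + 2))) := by
    rw [hconv]
    have hid : (b * c)⁻¹ * b ^ (2 * (m + 2)) = c ^ (n + 1) * b ^ (m + 1) := by
      have h1 : b ^ (2 * (m + 2)) = b * (b ^ (m + 2) * b ^ (m + 1)) := by
        rw [← pow_add, ← pow_succ']
        ring_nf
      rw [h1, hbc]
      have h2 : (c : G) ^ (n + 2) = c * c ^ (n + 1) := by rw [← pow_succ']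
      rw [h2]
      group
    rw [hid]
    exact hmulP _ _ (hpowP c hc n) (hpowP b hb m)
  -- Conjunct 3 : r 1 (b*c)
  have hc3 : r 1 (b * c) := by
    rw [hbca]; exact hmulP _ _ hB ha
  -- centrality of b^(m+2)
  have hBcen : ∀ g : G, Commute (b ^ (m + 2)) g := by
    have hpos : ∀ g : G, r 1 g → Commute (b ^ (m + 2)) g := by
      intro g hg
      have hg' := (hmem g).mp hg
      clear hg
      induction hg' using Subsemigroup.closure_induction with
      | mem x hx =>
        simp only [Set.mem_insert_iff, Set.mem_singleton_iff] at hx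
        rcases hx with hx | hx
        · rw [hx]; exact hBa
        · rw [hx]; exact hBc
      | mul x y hx hy ihx ihy => exact ihx.mul_right ihy
    intro g
    rcases htri 1 g with h | h | h
    · exact hpos g h
    · rw [← h]; exact Commute.one_right _
    · have hg : r 1 g⁻¹ := by
        have := hleft _ _ g⁻¹ h
        rwa [inv_mul_cancel, mul_one] at this
      simpa using (hpos g⁻¹ hg).inv_right
  -- every positive element is bounded above by a power of b^(m+2)
  have hbound : ∀ g : G, r 1 g → ∃ N : ℕ, r g ((b ^ (m + 2)) ^ (N + 1)) := by
    intro g hg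
    have hg' := (hmem g).mp hg
    clear hg
    induction hg' using Subsemigroup.closure_induction with
    | mem x hx =>
      refine ⟨0, ?_⟩
      simp only [Set.mem_insert_iff, Set.mem_singleton_iff] at hx
      rcases hx with hx | hx
      · rw [hx, pow_one, hconv]
        have h : a⁻¹ * b ^ (m + 2) = c ^ (n + 1) * b ^ (m + 1) := by
          rw [ha_eq]
          have h2 : (b : G) ^ (m + 2) = b * b ^ (m + 1) := by rw [← pow_succ']
          rw [h2]; group
        rw [h]
        exact hmulP _ _ (hpowP c hc n) (hpowP b hb m)
      · rw [hx, pow_one, hconv]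
        have h : c⁻¹ * b ^ (m + 2) = c ^ (n + 1) := by
          rw [hbc]
          have h2 : (c : G) ^ (n + 2) = c * c ^ (n + 1) := by rw [← pow_succ']
          rw [h2]; group
        rw [h]
        exact hpowP c hc n
    | mul x y hx hy ihx ihy =>
      obtain ⟨N₁, h₁⟩ := ihx
      obtain ⟨N₂, h₂⟩ := ihy
      refine ⟨N₁ + N₂ + 1, ?_⟩
      have s1 : r (x * y) (x * (b ^ (m + 2)) ^ (N₂ + 1)) := hleft _ _ x h₂
      have e1 : x * (b ^ (m + 2)) ^ (N₂ + 1) = (b ^ (m + 2)) ^ (N₂ + 1) * x :=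
        (((hBcen x).pow_left (N₂ + 1)).eq).symm
      rw [e1] at s1
      have s2 : r ((b ^ (m + 2)) ^ (N₂ + 1) * x)
          ((b ^ (m + 2)) ^ (N₂ + 1) * (b ^ (m + 2)) ^ (N₁ + 1)) := hleft _ _ _ h₁
      have e2 : (b ^ (m + 2)) ^ (N₂ + 1) * (b ^ (m + 2)) ^ (N₁ + 1)
          = (b ^ (m + 2)) ^ (N₁ + N₂ + 1 + 1) := by
        rw [← pow_add]
        congr 1
        omega
      rw [e2] at s2
      exact htrans _ _ _ s1 s2
  -- two-sided bounds by powers of b^(m+2)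
  have hBpos : ∀ N : ℕ, r 1 ((b ^ (m + 2)) ^ (N + 1)) := fun N => hpowP _ hB N
  have hBneg : ∀ N : ℕ, r (((b ^ (m + 2)) ^ (N + 1))⁻¹) 1 := by
    intro N
    have := hleft _ _ ((b ^ (m + 2)) ^ (N + 1))⁻¹ (hBpos N)
    rwa [mul_one, inv_mul_cancel] at this
  have hbound2 : ∀ y : G,
      ∃ N : ℕ, r (((b ^ (m + 2)) ^ (N + 1))⁻¹) y ∧ r y ((b ^ (m + 2)) ^ (N + 1)) := by
    intro y
    rcases htri 1 y with h | h | h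
    · obtain ⟨N, hN⟩ := hbound y h
      exact ⟨N, htrans _ _ _ (hBneg N) h, hN⟩
    · exact ⟨0, by rw [← h]; exact hBneg 0, by rw [← h]; exact hBpos 0⟩
    · have hy : r 1 y⁻¹ := by
        have := hleft _ _ y⁻¹ h
        rwa [inv_mul_cancel, mul_one] at this
      obtain ⟨N, hN⟩ := hbound y⁻¹ hy
      refine ⟨N, ?_, htrans _ _ _ h (hBpos N)⟩
      rw [hconv] at hN ⊢
      rw [inv_inv] at hN ⊢
      rwa [((hBcen y).pow_left (N + 1)).eq]
  -- Conjunct 4 : cofinality of b*c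
  have hc4 : ∀ y : G, ∃ k K : ℤ, r ((b * c) ^ k) y ∧ r y ((b * c) ^ K) := by
    intro y
    obtain ⟨N, hlo, hhi⟩ := hbound2 y
    have hsplit : (b * c) ^ (N + 1) = (b ^ (m + 2)) ^ (N + 1) * a ^ (N + 1) := by
      rw [hbca]; exact hBa.mul_pow (N + 1)
    refine ⟨-((N : ℤ) + 1), (N : ℤ) + 1, ?_, ?_⟩
    · have e : (b * c) ^ (-((N : ℤ) + 1)) = ((b * c) ^ (N + 1 : ℕ))⁻¹ := by
        rw [show -((N : ℤ) + 1) = -((N + 1 : ℕ) : ℤ) by push_cast; ring, zpow_neg,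
          zpow_natCast]
      rw [e, hsplit, mul_inv_rev]
      have hcomm : (a ^ (N + 1))⁻¹ * ((b ^ (m + 2)) ^ (N + 1))⁻¹
          = ((b ^ (m + 2)) ^ (N + 1))⁻¹ * (a ^ (N + 1))⁻¹ := by
        rw [← mul_inv_rev, ← mul_inv_rev]
        congr 1
        exact (hBa.pow_pow _ _).eq
      rw [hcomm]
      have hneg : r ((a ^ (N + 1))⁻¹) 1 := by
        have := hleft _ _ (a ^ (N + 1))⁻¹ (hpowP a ha N)
        rwa [mul_one, inv_mul_cancel] at this
      have hstep := hleft _ _ (((b ^ (m + 2)) ^ (N + 1))⁻¹) hneg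
      rw [mul_one] at hstep
      exact htrans _ _ _ hstep hlo
    · rw [show ((N : ℤ) + 1) = ((N + 1 : ℕ) : ℤ) by push_cast; ring, zpow_natCast, hsplit]
      refine htrans _ _ _ hhi ?_
      have := hleft _ _ ((b ^ (m + 2)) ^ (N + 1)) (hpowP a ha N)
      rwa [mul_one] at this
  -- conjugation by a preserves positivity
  have key2 : a⁻¹ * c * a = (c ^ (n + 1) * a) ^ (m + 1) * a := by
    have h1 : c ^ (n + 1) * a = c ^ (n + 1) * b * (c ^ (n + 1))⁻¹ := by
      rw [ha_eq]; group
    have h2 : (c ^ (n + 1) * a) ^ (m + 1) = c ^ (n + 1) * b ^ (m + 1) * (c ^ (n + 1))⁻¹ := by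
      rw [h1]; exact conj_pow
    have h3 : (b : G) ^ (m + 1) = b⁻¹ * c ^ (n + 2) := by
      rw [← hbc]; group
    have h4 : (c : G) ^ (n + 2) = c ^ (n + 1) * c := by rw [← pow_succ]
    rw [h2, h3, h4, ha_eq]
    group
  have hconj : ∀ g : G, r 1 g → r 1 (a⁻¹ * g * a) := by
    intro g hg
    have hg' := (hmem g).mp hg
    clear hg
    induction hg' using Subsemigroup.closure_induction with
    | mem x hx =>
      simp only [Set.mem_insert_iff, Set.mem_singleton_iff] at hx
      rcases hx with hx | hx
      · rw [hx]
        have h : a⁻¹ * a * a = a := by group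
        rw [h]; exact ha
      · rw [hx, key2]
        exact hmulP _ _ (hpowP _ (hmulP _ _ (hpowP c hc n) ha) m) ha
    | mul x y hx hy ihx ihy =>
      have h : a⁻¹ * (x * y) * a = (a⁻¹ * x * a) * (a⁻¹ * y * a) := by group
      rw [h]
      exact hmulP _ _ ihx ihy
  -- Conjunct 5 : right invariance under multiplication by b*c
  have hc5 : ∀ x x', r x x' → r (x * (b * c)) (x' * (b * c)) := by
    intro x x' hxx'
    rw [hconv] at hxx' ⊢
    have e : (x * (b * c))⁻¹ * (x' * (b * c))
        = a⁻¹ * ((b ^ (m + 2))⁻¹ * (x⁻¹ * x') * b ^ (m + 2)) * a := by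
      rw [hbca]; group
    have ecomm : (b ^ (m + 2))⁻¹ * (x⁻¹ * x') * b ^ (m + 2) = x⁻¹ * x' := by
      rw [mul_assoc, ← (hBcen (x⁻¹ * x')).eq, inv_mul_cancel_left]
    rw [e, ecomm]
    exact hconj _ hxx'
  exact ⟨hc1, hc2, hc3, hc4, hc5⟩

theorem bc_cofinal_right_invariant (m n : ℕ) (hm : 2 ≤ m) (hn : 2 ≤ n)
    (r : PresentedGroup (relsG m n) → PresentedGroup (relsG m n) → Prop)
    (hsto : IsStrictTotalOrder (PresentedGroup (relsG m n)) r)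
    (hleft : ∀ a b c, r a b → r (c * a) (c * b))
    (hcone : {g | r 1 g} =
      (Subsemigroup.closure {bG m n * cG m n ^ ((1 : ℤ) - n), cG m n} :
        Set (PresentedGroup (relsG m n)))) :
    r (bG m n ^ m) (bG m n * cG m n) ∧
    r (bG m n * cG m n) (bG m n ^ (2 * m)) ∧
    r 1 (bG m n * cG m n) ∧
    (∀ y : PresentedGroup (relsG m n),
      ∃ k K : ℤ, r ((bG m n * cG m n) ^ k) y ∧ r y ((bG m n * cG m n) ^ K)) ∧
    (∀ a a', r a a' → r (a * (bG m n * cG m n)) (a' * (bG m n * cG m n))) := by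
  exact abstract_core m n hm hn (bG m n) (cG m n) (bG_pow_eq_cG_pow m n) r hsto hleft hcone
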